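/- Let Λ = {(W_j, Λ_j, v_j)} be a g-fusion frame for H with bounds A, B and Γ = {(V_j, Γ_j, v_j)} be a g-fusion frame for X with bounds C, D. Then Λ⊕Γ = {(W_j ⊕ V_j, Λ_j ⊕ Γ_j, v_j)}_{j∈J} is a g-fusion frame for the direct sum H ⊕ X with bounds min{A,C} and max{B,D}. -/

import Mathlib

open ContinuousLinearMap

noncomputable def proj {E : Type*} [NormedAddCommGroup E] [InnerProductSpace ℂ E]
    (W : Submodule ℂ E) [CompleteSpace W] : E →L[ℂ] E :=
  W.subtypeL.comp (Submodule.orthogonalProjection W)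

/-- The operator U ⊕ V acting between ℓ²-direct sums of two Hilbert spaces. -/
noncomputable def oplus {E F E' F' : Type*} [NormedAddCommGroup E] [NormedSpace ℂ E]
    [NormedAddCommGroup F] [NormedSpace ℂ F] [NormedAddCommGroup E'] [NormedSpace ℂ E']
    [NormedAddCommGroup F'] [NormedSpace ℂ F']
    (A : E →L[ℂ] E') (B : F →L[ℂ] F') : WithLp 2 (E × F) →L[ℂ] WithLp 2 (E' × F') :=
  ((WithLp.prodContinuousLinearEquiv 2 ℂ E' F').symm.toContinuousLinearMap).comp
    ((A.prodMap B).comp (WithLp.prodContinuousLinearEquiv 2 ℂ E F).toContinuousLinearMap)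


lemma oplus_norm_sq {E F E' F' : Type*} [NormedAddCommGroup E] [NormedSpace ℂ E]
    [NormedAddCommGroup F] [NormedSpace ℂ F] [NormedAddCommGroup E'] [InnerProductSpace ℂ E']
    [NormedAddCommGroup F'] [InnerProductSpace ℂ F']
    (A : E →L[ℂ] E') (B : F →L[ℂ] F') (u : WithLp 2 (E × F)) :
    ‖oplus A B u‖ ^ 2 = ‖A u.fst‖ ^ 2 + ‖B u.snd‖ ^ 2 := by
  rw [WithLp.prod_norm_sq_eq_of_L2]
  rfl

/-- if Λ is a g-fusion frame for H with bounds A, B and Γ is a g-fusion frame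
for X with bounds C, D, then Λ⊕Γ is a g-fusion frame for H ⊕ X with bounds min{A,C},
max{B,D}. -/
theorem stmt14 {ι E F : Type*} [NormedAddCommGroup E] [InnerProductSpace ℂ E] [CompleteSpace E]
    [NormedAddCommGroup F] [InnerProductSpace ℂ F] [CompleteSpace F]
    {G X : ι → Type*} [∀ j, NormedAddCommGroup (G j)] [∀ j, InnerProductSpace ℂ (G j)]
    [∀ j, CompleteSpace (G j)] [∀ j, NormedAddCommGroup (X j)] [∀ j, InnerProductSpace ℂ (X j)]
    [∀ j, CompleteSpace (X j)]
    (W : ι → Submodule ℂ E) [∀ j, CompleteSpace (W j)]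
    (Vs : ι → Submodule ℂ F) [∀ j, CompleteSpace (Vs j)]
    (v : ι → ℝ) (hv : ∀ j, 0 < v j)
    (Λ : ∀ j, E →L[ℂ] G j) (Γ : ∀ j, F →L[ℂ] X j)
    (A B C D : ℝ) (hA : 0 < A) (hC : 0 < C)
    (hΛ : ∀ f : E, Summable (fun j => (v j) ^ 2 * ‖Λ j (proj (W j) f)‖ ^ 2) ∧
      A * ‖f‖ ^ 2 ≤ ∑' j, (v j) ^ 2 * ‖Λ j (proj (W j) f)‖ ^ 2 ∧
      ∑' j, (v j) ^ 2 * ‖Λ j (proj (W j) f)‖ ^ 2 ≤ B * ‖f‖ ^ 2)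
    (hΓ : ∀ g : F, Summable (fun j => (v j) ^ 2 * ‖Γ j (proj (Vs j) g)‖ ^ 2) ∧
      C * ‖g‖ ^ 2 ≤ ∑' j, (v j) ^ 2 * ‖Γ j (proj (Vs j) g)‖ ^ 2 ∧
      ∑' j, (v j) ^ 2 * ‖Γ j (proj (Vs j) g)‖ ^ 2 ≤ D * ‖g‖ ^ 2) :
    ∀ u : WithLp 2 (E × F),
      Summable (fun j => (v j) ^ 2 *
        ‖oplus (Λ j) (Γ j) (oplus (proj (W j)) (proj (Vs j)) u)‖ ^ 2) ∧
      min A C * ‖u‖ ^ 2 ≤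
        ∑' j, (v j) ^ 2 * ‖oplus (Λ j) (Γ j) (oplus (proj (W j)) (proj (Vs j)) u)‖ ^ 2 ∧
      ∑' j, (v j) ^ 2 * ‖oplus (Λ j) (Γ j) (oplus (proj (W j)) (proj (Vs j)) u)‖ ^ 2 ≤
        max B D * ‖u‖ ^ 2 := by
  intro u
  obtain ⟨hS1, hl1, hu1⟩ := hΛ u.fst
  obtain ⟨hS2, hl2, hu2⟩ := hΓ u.snd
  have hpt : (fun j => (v j) ^ 2 *
      ‖oplus (Λ j) (Γ j) (oplus (proj (W j)) (proj (Vs j)) u)‖ ^ 2)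
      = fun j => (v j) ^ 2 * ‖Λ j (proj (W j) u.fst)‖ ^ 2
        + (v j) ^ 2 * ‖Γ j (proj (Vs j) u.snd)‖ ^ 2 := by
    funext j
    have h1 : (oplus (proj (W j)) (proj (Vs j)) u).fst = proj (W j) u.fst := rfl
    have h2 : (oplus (proj (W j)) (proj (Vs j)) u).snd = proj (Vs j) u.snd := rfl
    rw [oplus_norm_sq, h1, h2]
    ring
  have hsum : Summable (fun j => (v j) ^ 2 *
      ‖oplus (Λ j) (Γ j) (oplus (proj (W j)) (proj (Vs j)) u)‖ ^ 2) := by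
    rw [hpt]; exact hS1.add hS2
  have htsum : ∑' j, (v j) ^ 2 *
      ‖oplus (Λ j) (Γ j) (oplus (proj (W j)) (proj (Vs j)) u)‖ ^ 2
      = (∑' j, (v j) ^ 2 * ‖Λ j (proj (W j) u.fst)‖ ^ 2)
        + ∑' j, (v j) ^ 2 * ‖Γ j (proj (Vs j) u.snd)‖ ^ 2 := by
    rw [hpt]; exact Summable.tsum_add hS1 hS2
  have hnorm : ‖u‖ ^ 2 = ‖u.fst‖ ^ 2 + ‖u.snd‖ ^ 2 := WithLp.prod_norm_sq_eq_of_L2 u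
  refine ⟨hsum, ?_, ?_⟩
  · rw [htsum, hnorm]
    have a1 : min A C * ‖u.fst‖ ^ 2 ≤ A * ‖u.fst‖ ^ 2 :=
      mul_le_mul_of_nonneg_right (min_le_left _ _) (sq_nonneg _)
    have a2 : min A C * ‖u.snd‖ ^ 2 ≤ C * ‖u.snd‖ ^ 2 :=
      mul_le_mul_of_nonneg_right (min_le_right _ _) (sq_nonneg _)
    nlinarith [hl1, hl2]
  · rw [htsum, hnorm]
    have a1 : B * ‖u.fst‖ ^ 2 ≤ max B D * ‖u.fst‖ ^ 2 :=
      mul_le_mul_of_nonneg_right (le_max_left _ _) (sq_nonneg _)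
    have a2 : D * ‖u.snd‖ ^ 2 ≤ max B D * ‖u.snd‖ ^ 2 :=
      mul_le_mul_of_nonneg_right (le_max_right _ _) (sq_nonneg _)
    nlinarith [hu1, hu2]
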